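/- Let f: X → (−∞,+∞] be proper, lower semicontinuous, and convex, and let A: X → X* be continuous, linear, and antisymmetric. Then the function (x,x*) ↦ f(x) + f*(x* − Ax) is an autoconjugate representer for the operator ∂f + A. -/

import Mathlib

noncomputable section
open scoped Classical
open Filter Topology

/-- The Fenchel conjugate of `F : X × X* → (-∞,+∞]`, as a function on `X* × X`:
`F*(x*,x) = sup_{(y,y*)} (⟨y,x*⟩ + ⟨x,y*⟩ - F(y,y*))`. -/
def conj2 {X : Type*} [NormedAddCommGroup X] [NormedSpace ℝ X]
    (F : X × (X →L[ℝ] ℝ) → EReal) : (X →L[ℝ] ℝ) × X → EReal :=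
  fun p => ⨆ q : X × (X →L[ℝ] ℝ), ((p.1 q.1 + q.2 p.2 : ℝ) : EReal) - F q

/-- `F` is autoconjugate: `F*(x*,x) = F(x,x*)` for all `(x,x*)`. -/
def Autoconjugate {X : Type*} [NormedAddCommGroup X] [NormedSpace ℝ X]
    (F : X × (X →L[ℝ] ℝ) → EReal) : Prop :=
  ∀ (x : X) (x' : X →L[ℝ] ℝ), conj2 F (x', x) = F (x, x')

/-- `F` is a representer for the set-valued operator `A : X ⇉ X*`:
`gra A = {(x,x*) : F(x,x*) = ⟨x,x*⟩}`. -/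
def IsRepresenter {X : Type*} [NormedAddCommGroup X] [NormedSpace ℝ X]
    (F : X × (X →L[ℝ] ℝ) → EReal) (A : X → Set (X →L[ℝ] ℝ)) : Prop :=
  ∀ (x : X) (x' : X →L[ℝ] ℝ), x' ∈ A x ↔ F (x, x') = ((x' x : ℝ) : EReal)

/-- A set-valued operator `A : X ⇉ X*` is monotone. -/
def MonotoneOp {X : Type*} [NormedAddCommGroup X] [NormedSpace ℝ X]
    (A : X → Set (X →L[ℝ] ℝ)) : Prop :=
  ∀ ⦃x y : X⦄ ⦃x' y' : X →L[ℝ] ℝ⦄, x' ∈ A x → y' ∈ A y → 0 ≤ (x' - y') (x - y)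

/-- A set-valued operator is maximal monotone if it is monotone and admits no proper
monotone extension (in the sense of graph inclusion). -/
def MaximalMonotoneOp {X : Type*} [NormedAddCommGroup X] [NormedSpace ℝ X]
    (A : X → Set (X →L[ℝ] ℝ)) : Prop :=
  MonotoneOp A ∧ ∀ B : X → Set (X →L[ℝ] ℝ), MonotoneOp B → (∀ x, A x ⊆ B x) → B = A

/-- The quadratic function `q_A(x) = ½⟨x,Ax⟩` associated with a continuous linear
`A : X → X*`. -/
def qF {X : Type*} [NormedAddCommGroup X] [NormedSpace ℝ X]
    (A : X →L[ℝ] X →L[ℝ] ℝ) : X → ℝ :=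
  fun x => (1 / 2) * A x x

/-- The Fenchel conjugate of a real-valued function `φ : X → ℝ`, as an `EReal`-valued
function on `X*`: `φ*(x*) = sup_y (⟨y,x*⟩ - φ(y))`. -/
def legendre {X : Type*} [NormedAddCommGroup X] [NormedSpace ℝ X]
    (φ : X → ℝ) : (X →L[ℝ] ℝ) → EReal :=
  fun x' => ⨆ y : X, ((x' y - φ y : ℝ) : EReal)

/-- The symmetric part `A₊ = ½A + ½A*` of a continuous linear `A : X → X*`, where the
adjoint (restricted to `X`) is `A.flip`. -/
def symPart {X : Type*} [NormedAddCommGroup X] [NormedSpace ℝ X]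
    (A : X →L[ℝ] X →L[ℝ] ℝ) : X →L[ℝ] X →L[ℝ] ℝ :=
  (1 / 2 : ℝ) • (A + A.flip)

/-- The antisymmetric part `A∘ = ½A - ½A*` of a continuous linear `A : X → X*`. -/
def antiPart {X : Type*} [NormedAddCommGroup X] [NormedSpace ℝ X]
    (A : X →L[ℝ] X →L[ℝ] ℝ) : X →L[ℝ] X →L[ℝ] ℝ :=
  (1 / 2 : ℝ) • (A - A.flip)

/-- The Fitzpatrick function of a continuous linear `A : X → X*`:
`F_A(x,x*) = sup_y (⟨x,Ay⟩ + ⟨y,x*⟩ - ⟨y,Ay⟩)`. -/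
def fitz {X : Type*} [NormedAddCommGroup X] [NormedSpace ℝ X]
    (A : X →L[ℝ] X →L[ℝ] ℝ) : X × (X →L[ℝ] ℝ) → EReal :=
  fun p => ⨆ y : X, ((A y p.1 + p.2 y - A y y : ℝ) : EReal)

/-- The Fenchel conjugate of an extended-real-valued `f : X → (-∞,+∞]`:
`f*(x*) = sup_x (⟨x,x*⟩ - f(x))`. -/
def econj {X : Type*} [NormedAddCommGroup X] [NormedSpace ℝ X]
    (f : X → EReal) : (X →L[ℝ] ℝ) → EReal :=
  fun x' => ⨆ x : X, ((x' x : ℝ) : EReal) - f x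

/-- The subdifferential of `f : X → (-∞,+∞]`:
`∂f(x) = {x* : ∀ y, ⟨y-x,x*⟩ + f(x) ≤ f(y)}`. -/
def esubdiff {X : Type*} [NormedAddCommGroup X] [NormedSpace ℝ X]
    (f : X → EReal) : X → Set (X →L[ℝ] ℝ) :=
  fun x => {x' | ∀ y : X, ((x' (y - x) : ℝ) : EReal) + f x ≤ f y}


namespace Stmt5Aux

lemma iSup_prod_add {ι κ : Type*} (a : ι → EReal) (b : κ → EReal) :
    (⨆ p : ι × κ, a p.1 + b p.2) = (⨆ i, a i) + ⨆ j, b j := by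
  apply le_antisymm
  · exact iSup_le fun p => add_le_add (le_iSup a p.1) (le_iSup b p.2)
  · refine EReal.add_le_of_forall_lt fun a' ha' b' hb' => ?_
    obtain ⟨i, hi⟩ := lt_iSup_iff.1 ha'
    obtain ⟨j, hj⟩ := lt_iSup_iff.1 hb'
    exact le_trans (add_le_add hi.le hj.le)
      (le_iSup (fun p : ι × κ => a p.1 + b p.2) (i, j))

lemma le_of_forall_real_lt {a c : EReal} (h : ∀ r : ℝ, (r : EReal) < a → (r : EReal) ≤ c) :
    a ≤ c := by
  by_contra hc
  push_neg at hc
  obtain ⟨r, h1, h2⟩ := EReal.exists_between_coe_real hc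
  exact absurd (h r h2) (not_le.2 h1)

lemma coe_add_sub_add {r s : ℝ} {a b : EReal} (ha : a ≠ ⊥) (hb : b ≠ ⊥) :
    ((r + s : ℝ) : EReal) - (a + b) = ((r : EReal) - a) + ((s : EReal) - b) := by
  induction a using EReal.rec with
  | bot => exact absurd rfl ha
  | top =>
      rw [EReal.top_add_of_ne_bot hb]
      simp only [sub_eq_add_neg, EReal.neg_top]
      rw [EReal.add_bot, EReal.add_bot, EReal.bot_add]
  | coe a' =>
      induction b using EReal.rec with
      | bot => exact absurd rfl hb
      | top =>
          rw [EReal.add_top_of_ne_bot (EReal.coe_ne_bot a')]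
          simp only [sub_eq_add_neg, EReal.neg_top]
          rw [EReal.add_bot, EReal.add_bot]
          rw [← EReal.coe_neg, ← EReal.coe_add, EReal.add_bot]
      | coe b' =>
          norm_cast
          ring

lemma coe_sub_ne_top {r : ℝ} {a : EReal} (ha : a ≠ ⊥) : (r : EReal) - a ≠ ⊤ := by
  induction a using EReal.rec with
  | bot => exact absurd rfl ha
  | top => simp [sub_eq_add_neg]
  | coe a' => rw [← EReal.coe_sub]; exact EReal.coe_ne_top _

lemma coe_sub_coe_sub (r : ℝ) (a : EReal) (ha : a ≠ ⊥) :
    (r : EReal) - ((r : EReal) - a) = a := by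
  induction a using EReal.rec with
  | bot => exact absurd rfl ha
  | top => simp [sub_eq_add_neg]
  | coe a' => norm_cast; ring


lemma div_helper {t P Q b : ℝ} (ht : 0 < t) (h : P - b * t ≤ Q) : t⁻¹ * P - b ≤ Q / t := by
  have h1 : t⁻¹ * P - b = (P - b * t) / t := by field_simp
  rw [h1]
  exact (div_le_div_iff_of_pos_right ht).mpr h

lemma div_helper2 {t P Q r : ℝ} (ht : 0 < t) (h : r * t ≤ P - Q) : r ≤ t⁻¹ * P - Q / t := by
  have h1 : t⁻¹ * P - Q / t = (P - Q) / t := by field_simp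
  rw [h1, le_div_iff₀ ht]
  exact h

variable {X : Type*} [NormedAddCommGroup X] [NormedSpace ℝ X]

lemma econj_ne_bot (f : X → EReal) (hbot : ∀ x, f x ≠ ⊥) (hproper : ∃ x, f x ≠ ⊤)
    (x' : X →L[ℝ] ℝ) : econj f x' ≠ ⊥ := by
  obtain ⟨x₀, h₀⟩ := hproper
  have hx₀ : ((f x₀).toReal : EReal) = f x₀ := EReal.coe_toReal h₀ (hbot x₀)
  have hle : ((x' x₀ - (f x₀).toReal : ℝ) : EReal) ≤ econj f x' := by
    have h := le_iSup (fun y => ((x' y : ℝ) : EReal) - f y) x₀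
    rwa [← hx₀, ← EReal.coe_sub] at h
  intro h
  rw [h, le_bot_iff] at hle
  exact EReal.coe_ne_bot _ hle


lemma esubdiff_iff (f : X → EReal) (hbot : ∀ x, f x ≠ ⊥) (hproper : ∃ x, f x ≠ ⊤)
    (x : X) (x' : X →L[ℝ] ℝ) :
    x' ∈ esubdiff f x ↔ f x + econj f x' = ((x' x : ℝ) : EReal) := by
  obtain ⟨x₀, h₀⟩ := hproper
  constructor
  · intro hsub
    have hfx_ne_top : f x ≠ ⊤ := by
      intro htop
      have h1 := hsub x₀
      rw [htop, EReal.add_top_of_ne_bot (EReal.coe_ne_bot _)] at h1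
      exact h₀ (top_le_iff.1 h1)
    have hfx : ((f x).toReal : EReal) = f x := EReal.coe_toReal hfx_ne_top (hbot x)
    set a : ℝ := (f x).toReal with ha
    have hconj : econj f x' = ((x' x - a : ℝ) : EReal) := by
      apply le_antisymm
      · apply iSup_le
        intro y
        by_cases hy : f y = ⊤
        · rw [hy]
          simp only [sub_eq_add_neg, EReal.neg_top, EReal.add_bot]
          exact bot_le
        · have hfy : ((f y).toReal : EReal) = f y := EReal.coe_toReal hy (hbot y)
          set b : ℝ := (f y).toReal with hb
          have h1 := hsub y
          rw [← hfy, ← hfx, ← EReal.coe_add] at h1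
          have h2 : x' (y - x) + a ≤ b := EReal.coe_le_coe_iff.1 h1
          rw [map_sub] at h2
          rw [← hfy, ← EReal.coe_sub]
          exact EReal.coe_le_coe_iff.2 (by linarith)
      · have h := le_iSup (fun y => ((x' y : ℝ) : EReal) - f y) x
        rwa [← hfx, ← EReal.coe_sub] at h
    rw [← hfx, hconj, ← EReal.coe_add]
    norm_cast
    ring
  · intro heq
    have hne_bot := econj_ne_bot f hbot ⟨x₀, h₀⟩ x'
    have hfx_ne_top : f x ≠ ⊤ := by
      intro htop
      rw [htop, EReal.top_add_of_ne_bot hne_bot] at heq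
      exact EReal.coe_ne_top _ heq.symm
    have hfx : ((f x).toReal : EReal) = f x := EReal.coe_toReal hfx_ne_top (hbot x)
    set a : ℝ := (f x).toReal with ha
    have hconj_ne_top : econj f x' ≠ ⊤ := by
      intro htop
      rw [htop, EReal.add_top_of_ne_bot (hbot x)] at heq
      exact EReal.coe_ne_top _ heq.symm
    have hc : ((econj f x').toReal : EReal) = econj f x' := EReal.coe_toReal hconj_ne_top hne_bot
    set c : ℝ := (econj f x').toReal with hcc
    have hac : a + c = x' x := by
      rw [← hfx, ← hc, ← EReal.coe_add] at heq
      exact_mod_cast heq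
    intro y
    by_cases hy : f y = ⊤
    · rw [hy]; exact le_top
    · have hfy : ((f y).toReal : EReal) = f y := EReal.coe_toReal hy (hbot y)
      set b : ℝ := (f y).toReal with hb
      have h1 : ((x' y : ℝ) : EReal) - f y ≤ econj f x' :=
        le_iSup (fun y => ((x' y : ℝ) : EReal) - f y) y
      rw [← hfy, ← hc, ← EReal.coe_sub] at h1
      have h2 : x' y - b ≤ c := EReal.coe_le_coe_iff.1 h1
      rw [← hfy, ← hfx, ← EReal.coe_add]
      refine EReal.coe_le_coe_iff.2 ?_
      rw [map_sub]
      linarith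

lemma sep_step (f : X → EReal)
    (hcvx : Convex ℝ {p : X × ℝ | f p.1 ≤ (p.2 : EReal)})
    (hcl : IsClosed {p : X × ℝ | f p.1 ≤ (p.2 : EReal)})
    (z : X) (c : ℝ) (hz : ¬ f z ≤ (c : EReal)) :
    ∃ (ψ : X →L[ℝ] ℝ) (s u : ℝ),
      (∀ y : X, ∀ t : ℝ, f y ≤ (t : EReal) → ψ y + s * t < u) ∧ u < ψ z + s * c := by
  obtain ⟨φ, u, hφS, hφz⟩ := geometric_hahn_banach_closed_point hcvx hcl
    (show (z, c) ∉ {p : X × ℝ | f p.1 ≤ (p.2 : EReal)} from hz)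
  set ψ : X →L[ℝ] ℝ := φ.comp (ContinuousLinearMap.inl ℝ X ℝ) with hψ
  have key : ∀ (y : X) (t : ℝ), φ (y, t) = ψ y + φ (0, 1) * t := by
    intro y t
    have hsplit : (y, t) = (y, (0 : ℝ)) + t • ((0 : X), (1 : ℝ)) := by
      simp [Prod.ext_iff]
    rw [hsplit, map_add, map_smul, smul_eq_mul]
    simp [hψ, mul_comm]
  refine ⟨ψ, φ (0, 1), u, ?_, ?_⟩
  · intro y t hyt
    have := hφS (y, t) hyt
    rwa [key] at this
  · have := hφz
    rwa [key] at this


lemma fenchel_moreau (f : X → EReal) (hbot : ∀ x, f x ≠ ⊥) (hproper : ∃ x, f x ≠ ⊤)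
    (hlsc : LowerSemicontinuous f)
    (hconv : ∀ (x y : X) (t : ℝ), 0 ≤ t → t ≤ 1 →
      f (t • x + (1 - t) • y) ≤ ((t : ℝ) : EReal) * f x + (((1 - t) : ℝ) : EReal) * f y)
    (x : X) :
    (⨆ g : X →L[ℝ] ℝ, ((g x : ℝ) : EReal) - econj f g) = f x := by
  obtain ⟨x₀, h₀⟩ := hproper
  have hfx₀ : ((f x₀).toReal : EReal) = f x₀ := EReal.coe_toReal h₀ (hbot x₀)
  set r₀ : ℝ := (f x₀).toReal with hr₀
  apply le_antisymm
  · apply iSup_le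
    intro g
    have h1 : ((g x : ℝ) : EReal) - f x ≤ econj f g :=
      le_iSup (fun y => ((g y : ℝ) : EReal) - f y) x
    calc ((g x : ℝ) : EReal) - econj f g
        ≤ ((g x : ℝ) : EReal) - (((g x : ℝ) : EReal) - f x) := EReal.sub_le_sub le_rfl h1
      _ = f x := coe_sub_coe_sub _ _ (hbot x)
  · set S : Set (X × ℝ) := {p | f p.1 ≤ (p.2 : EReal)} with hSdef
    have hcvx : Convex ℝ S := by
      rintro p hp q hq a b ha hb hab
      have hb' : b = 1 - a := by linarith
      subst hb'
      have hgoal : f (a • p.1 + (1 - a) • q.1) ≤ ((a * p.2 + (1 - a) * q.2 : ℝ) : EReal) := by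
        refine le_trans (hconv p.1 q.1 a ha (by linarith)) ?_
        rw [EReal.coe_add, EReal.coe_mul, EReal.coe_mul]
        exact add_le_add (mul_le_mul_of_nonneg_left hp (by exact_mod_cast ha))
          (mul_le_mul_of_nonneg_left hq (by exact_mod_cast (by linarith : (0:ℝ) ≤ 1 - a)))
      exact hgoal
    have hcl : IsClosed S := by
      rw [← isOpen_compl_iff, isOpen_iff_mem_nhds]
      rintro ⟨y, t⟩ hyt
      have h1 : (t : EReal) < f y := not_le.1 hyt
      obtain ⟨c, hc1, hc2⟩ := EReal.exists_between_coe_real h1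
      have hev1 : {z : X | (c : EReal) < f z} ∈ 𝓝 y := hlsc y _ hc2
      have hev2 : Set.Iio c ∈ 𝓝 t := Iio_mem_nhds (EReal.coe_lt_coe_iff.1 hc1)
      rw [nhds_prod_eq]
      apply Filter.mem_of_superset (Filter.prod_mem_prod hev1 hev2)
      rintro ⟨z, s⟩ ⟨hz, hs⟩
      simp only [Set.mem_compl_iff, hSdef, Set.mem_setOf_eq, not_le]
      calc ((s : ℝ) : EReal) < (c : EReal) := EReal.coe_lt_coe_iff.2 hs
        _ < f z := hz
    apply le_of_forall_real_lt
    intro r hr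
    obtain ⟨ψ, s, u, H1, H2⟩ := sep_step f hcvx hcl x r (not_le.2 hr)
    obtain ⟨ψ', s', u', H1', H2'⟩ := sep_step f hcvx hcl x₀ (r₀ - 1) (by
      rw [← hfx₀]
      exact not_le.2 (EReal.coe_lt_coe_iff.2 (by linarith)))
    have hs : s ≤ 0 := by
      by_contra hpos
      push_neg at hpos
      set t := max r₀ ((u - ψ x₀) / s) with ht
      have h1 := H1 x₀ t (by rw [← hfx₀]; exact EReal.coe_le_coe_iff.2 (le_max_left _ _))
      have h2 : (u - ψ x₀) / s ≤ t := le_max_right _ _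
      have h3 : s * ((u - ψ x₀) / s) ≤ s * t := mul_le_mul_of_nonneg_left h2 hpos.le
      rw [mul_div_cancel₀ _ (ne_of_gt hpos)] at h3
      linarith
    have hs' : s' < 0 := by
      have h1 := H1' x₀ r₀ (le_of_eq hfx₀.symm)
      nlinarith [H2']
    have hDpos : 0 < ψ x + s * r - u := by linarith [H2]
    set D : ℝ := ψ x + s * r - u with hD
    set lam : ℝ := max 0 ((u' - ψ' x - s' * r) / D) with hlam
    have hlam0 : 0 ≤ lam := le_max_left _ _
    have hσneg : s' + lam * s < 0 := by nlinarith
    set τ : ℝ := -(s' + lam * s) with hτ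
    have hτpos : 0 < τ := by rw [hτ]; linarith
    set g : X →L[ℝ] ℝ := τ⁻¹ • (ψ' + lam • ψ) with hg
    have hg_apply : ∀ y : X, g y = τ⁻¹ * (ψ' y + lam * ψ y) := by
      intro y
      rw [hg]
      simp only [ContinuousLinearMap.smul_apply, ContinuousLinearMap.add_apply, smul_eq_mul,
        mul_add]
    set β : ℝ := (u' + lam * u) / τ with hβ
    have hconj_le : econj f g ≤ (β : EReal) := by
      apply iSup_le
      intro y
      by_cases hy : f y = ⊤
      · rw [hy]
        simp only [sub_eq_add_neg, EReal.neg_top, EReal.add_bot]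
        exact bot_le
      · have hfy : ((f y).toReal : EReal) = f y := EReal.coe_toReal hy (hbot y)
        set b : ℝ := (f y).toReal with hb
        have h1 := H1 y b (le_of_eq hfy.symm)
        have h1' := H1' y b (le_of_eq hfy.symm)
        have h3 : lam * (ψ y + s * b) ≤ lam * u := mul_le_mul_of_nonneg_left h1.le hlam0
        have key : g y - b ≤ β := by
          rw [hg_apply, hβ]
          apply div_helper hτpos
          rw [hτ]
          nlinarith [h1', h3]
        calc ((g y : ℝ) : EReal) - f y = (((g y : ℝ) - b : ℝ) : EReal) := by
              rw [← hfy, ← EReal.coe_sub]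
          _ ≤ (β : EReal) := EReal.coe_le_coe_iff.2 key
    have h4 : u' - ψ' x - s' * r ≤ lam * D := by
      have := le_max_right (0 : ℝ) ((u' - ψ' x - s' * r) / D)
      calc u' - ψ' x - s' * r ≤ ((u' - ψ' x - s' * r) / D) * D := by
            rw [div_mul_cancel₀ _ (ne_of_gt hDpos)]
        _ ≤ lam * D := mul_le_mul_of_nonneg_right this hDpos.le
    have hkey2 : r ≤ g x - β := by
      rw [hg_apply, hβ]
      apply div_helper2 hτpos
      rw [hτ]
      nlinarith [h4]
    have hfinal : (r : EReal) ≤ ((g x : ℝ) : EReal) - econj f g := by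
      calc (r : EReal) ≤ (((g x : ℝ) - β : ℝ) : EReal) := EReal.coe_le_coe_iff.2 hkey2
        _ = ((g x : ℝ) : EReal) - (β : EReal) := EReal.coe_sub _ _
        _ ≤ ((g x : ℝ) : EReal) - econj f g := EReal.sub_le_sub le_rfl hconj_le
    exact hfinal.trans (le_iSup (fun g : X →L[ℝ] ℝ => ((g x : ℝ) : EReal) - econj f g) g)

end Stmt5Aux


/-- Example 2.6, Ghoussoub. If `f` is proper, lower semicontinuous and
convex, and `A : X → X*` is continuous, linear and antisymmetric, then
`(x,x*) ↦ f(x) + f*(x* - Ax)` is an autoconjugate representer for `∂f + A`. -/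
theorem stmt5 {X : Type*} [NormedAddCommGroup X] [NormedSpace ℝ X] [CompleteSpace X]
    (hrefl : Function.Surjective (NormedSpace.inclusionInDoubleDual ℝ X))
    (f : X → EReal)
    (hbot : ∀ x, f x ≠ ⊥) (hproper : ∃ x, f x ≠ ⊤)
    (hlsc : LowerSemicontinuous f)
    (hconv : ∀ (x y : X) (t : ℝ), 0 ≤ t → t ≤ 1 →
      f (t • x + (1 - t) • y) ≤ ((t : ℝ) : EReal) * f x + (((1 - t) : ℝ) : EReal) * f y)
    (A : X →L[ℝ] X →L[ℝ] ℝ)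
    (hanti : ∀ x y : X, A x y = -(A y x)) :
    Autoconjugate (fun p : X × (X →L[ℝ] ℝ) => f p.1 + econj f (p.2 - A p.1)) ∧
    IsRepresenter (fun p : X × (X →L[ℝ] ℝ) => f p.1 + econj f (p.2 - A p.1))
      (fun x => {x' | ∃ a ∈ esubdiff f x, x' = a + A x}) := by
  have hAxx : ∀ z : X, A z z = 0 := fun z => by have := hanti z z; linarith
  constructor
  · intro x x'
    show (⨆ q : X × (X →L[ℝ] ℝ), ((x' q.1 + q.2 x : ℝ) : EReal) -
        (f q.1 + econj f (q.2 - A q.1))) = f x + econj f (x' - A x)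
    set T : X × (X →L[ℝ] ℝ) → EReal := fun q =>
      ((x' q.1 + q.2 x : ℝ) : EReal) - (f q.1 + econj f (q.2 - A q.1)) with hT
    have hsurj : Function.Surjective
        (fun q : X × (X →L[ℝ] ℝ) => ((q.1, q.2 + A q.1) : X × (X →L[ℝ] ℝ))) := by
      intro q
      exact ⟨(q.1, q.2 - A q.1), by simp⟩
    have hTe : ∀ q : X × (X →L[ℝ] ℝ),
        T (q.1, q.2 + A q.1) =
          ((((x' - A x) q.1 : ℝ)) : EReal) - f q.1 + ((((q.2 x : ℝ)) : EReal) - econj f q.2) := by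
      intro q
      rw [hT]
      show ((x' q.1 + (q.2 + A q.1) x : ℝ) : EReal) -
          (f q.1 + econj f ((q.2 + A q.1) - A q.1)) = _
      rw [add_sub_cancel_right]
      have hnum : x' q.1 + (q.2 + A q.1) x = (x' - A x) q.1 + q.2 x := by
        simp only [ContinuousLinearMap.add_apply, ContinuousLinearMap.sub_apply]
        rw [hanti q.1 x]
        ring
      rw [hnum, Stmt5Aux.coe_add_sub_add (hbot q.1)
        (Stmt5Aux.econj_ne_bot f hbot hproper q.2)]
    calc (⨆ q : X × (X →L[ℝ] ℝ), T q)
        = ⨆ q : X × (X →L[ℝ] ℝ), T (q.1, q.2 + A q.1) :=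
          (hsurj.iSup_comp T).symm
      _ = ⨆ q : X × (X →L[ℝ] ℝ),
            (((((x' - A x) q.1 : ℝ)) : EReal) - f q.1 + ((((q.2 x : ℝ)) : EReal) - econj f q.2)) :=
          iSup_congr hTe
      _ = (⨆ y : X, (((x' - A x) y : ℝ) : EReal) - f y) +
            ⨆ z : X →L[ℝ] ℝ, ((z x : ℝ) : EReal) - econj f z :=
          Stmt5Aux.iSup_prod_add (fun y : X => (((x' - A x) y : ℝ) : EReal) - f y)
            (fun z : X →L[ℝ] ℝ => ((z x : ℝ) : EReal) - econj f z)
      _ = econj f (x' - A x) + f x := by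
          rw [Stmt5Aux.fenchel_moreau f hbot hproper hlsc hconv x]
          rfl
      _ = f x + econj f (x' - A x) := add_comm _ _
  · intro x x'
    show (∃ a ∈ esubdiff f x, x' = a + A x) ↔
        f x + econj f (x' - A x) = ((x' x : ℝ) : EReal)
    constructor
    · rintro ⟨a, ha, rfl⟩
      have h1 : (a + A x) - A x = a := add_sub_cancel_right a (A x)
      have h2 := (Stmt5Aux.esubdiff_iff f hbot hproper x a).1 ha
      rw [h1, h2]
      norm_num [ContinuousLinearMap.add_apply, hAxx x]
    · intro h
      refine ⟨x' - A x, ?_, (sub_add_cancel x' (A x)).symm⟩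
      apply (Stmt5Aux.esubdiff_iff f hbot hproper x (x' - A x)).2
      have hx : (x' - A x) x = x' x := by
        simp [ContinuousLinearMap.sub_apply, hAxx x]
      rw [hx]
      exact h
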